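/- arXiv:1602.07715 — 3 statements merged into one kernel-verified Lean document; each statement's English description precedes it below -/
import Mathlib

section
/- The entropy distance H(L1,L2) = h(L1 Δ L2)/h(L1 ∪ L2) (with H = 0 if h(L1 ∪ L2) = 0) satisfies the ultra-metric inequality: H(L1,L3) ≤ max(H(L1,L2), H(L2,L3)) for all languages L1, L2, L3. -/
open Classical in
/-- The entropy distance built from an abstract entropy function `h`. -/
noncomputable def entDist {α : Type*} (h : Set (List α) → ℝ)
    (L1 L2 : Set (List α)) : ℝ :=
  if h (L1 ∪ L2) = 0 then 0
  else h ((L1 \ L2) ∪ (L2 \ L1)) / h (L1 ∪ L2)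

lemma entDist_nonneg {α : Type*} (h : Set (List α) → ℝ)
    (hnonneg : ∀ A, 0 ≤ h A) (A B : Set (List α)) : 0 ≤ entDist h A B := by
  unfold entDist
  split
  · exact le_refl 0
  · exact div_nonneg (hnonneg _) (hnonneg _)

lemma entDist_le_one {α : Type*} (h : Set (List α) → ℝ)
    (hnonneg : ∀ A, 0 ≤ h A)
    (hmono : ∀ A B : Set (List α), A ⊆ B → h A ≤ h B)
    (A B : Set (List α)) : entDist h A B ≤ 1 := by
  unfold entDist
  split
  · norm_num
  · apply div_le_one_of_le₀
    · exact hmono _ _ (by intro x hx; rcases hx with ⟨hx, _⟩ | ⟨hx, _⟩ <;> simp [hx])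
    · exact hnonneg _

lemma entDist_symm {α : Type*} (h : Set (List α) → ℝ) (A B : Set (List α)) :
    entDist h A B = entDist h B A := by
  unfold entDist
  rw [Set.union_comm A B, Set.union_comm (A \ B)]

lemma symmdiff_subset {α : Type*} (L1 L2 L3 : Set (List α)) :
    ((L1 \ L3) ∪ (L3 \ L1)) ⊆ ((L1 \ L2) ∪ (L2 \ L1)) ∪ ((L2 \ L3) ∪ (L3 \ L2)) := by
  intro x hx
  simp only [Set.mem_union, Set.mem_diff] at *
  tauto

lemma entDist_aux {α : Type*} (h : Set (List α) → ℝ)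
    (hnonneg : ∀ A, 0 ≤ h A)
    (hmono : ∀ A B : Set (List α), A ⊆ B → h A ≤ h B)
    (hunion : ∀ A B : Set (List α), h (A ∪ B) = max (h A) (h B))
    (L1 L2 L3 : Set (List α)) (hb : h L2 ≤ h L3) (hac : h L1 ≤ h L3)
    (h13 : h (L1 ∪ L3) ≠ 0) :
    entDist h L1 L3 ≤ max (entDist h L1 L2) (entDist h L2 L3) := by
  have hU13 : h (L1 ∪ L3) = h L3 := by rw [hunion]; exact max_eq_right hac
  have hU23 : h (L2 ∪ L3) = h L3 := by rw [hunion]; exact max_eq_right hb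
  have hc3 : 0 < h L3 := by
    rcases lt_or_eq_of_le (hnonneg L3) with h' | h'
    · exact h'
    · exact absurd (hU13.trans h'.symm) h13
  have hkey : h ((L1 \ L3) ∪ (L3 \ L1)) ≤
      max (h ((L1 \ L2) ∪ (L2 \ L1))) (h ((L2 \ L3) ∪ (L3 \ L2))) := by
    calc h ((L1 \ L3) ∪ (L3 \ L1))
        ≤ h (((L1 \ L2) ∪ (L2 \ L1)) ∪ ((L2 \ L3) ∪ (L3 \ L2))) :=
          hmono _ _ (symmdiff_subset L1 L2 L3)
      _ = _ := hunion _ _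
  rcases max_cases (h ((L1 \ L2) ∪ (L2 \ L1))) (h ((L2 \ L3) ∪ (L3 \ L2))) with
    ⟨heq, _⟩ | ⟨heq, _⟩
  all_goals rw [heq] at hkey
  · -- dominated by d12
    by_cases h12 : h (L1 ∪ L2) = 0
    · -- then d12 = 0 so d13 = 0
      have : h ((L1 \ L2) ∪ (L2 \ L1)) ≤ 0 := by
        rw [← h12]
        exact hmono _ _ (by intro x hx; rcases hx with ⟨hx, _⟩ | ⟨hx, _⟩ <;> simp [hx])
      have h0 : h ((L1 \ L3) ∪ (L3 \ L1)) = 0 :=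
        le_antisymm (hkey.trans this) (hnonneg _)
      unfold entDist
      rw [if_neg h13, h0]
      simp only [zero_div]
      exact le_max_of_le_left (entDist_nonneg h hnonneg L1 L2)
    · have hU12 : h (L1 ∪ L2) ≤ h L3 := by
        rw [hunion]; exact max_le hac hb
      have h12pos : 0 < h (L1 ∪ L2) :=
        lt_of_le_of_ne (hnonneg _) (Ne.symm h12)
      refine le_max_of_le_left ?_
      unfold entDist
      rw [if_neg h13, if_neg h12, hU13]
      exact div_le_div₀ (hnonneg _) hkey h12pos hU12
  · -- dominated by d23
    by_cases h23 : h (L2 ∪ L3) = 0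
    · exact absurd (hU23 ▸ h23) (ne_of_gt hc3)
    · refine le_max_of_le_right ?_
      unfold entDist
      rw [if_neg h13, if_neg h23, hU13, hU23]
      gcongr

theorem stmt12 {α : Type*} (h : Set (List α) → ℝ)
    (hnonneg : ∀ A, 0 ≤ h A)
    (hmono : ∀ A B : Set (List α), A ⊆ B → h A ≤ h B)
    (hunion : ∀ A B : Set (List α), h (A ∪ B) = max (h A) (h B))
    (L1 L2 L3 : Set (List α)) :
    entDist h L1 L3 ≤ max (entDist h L1 L2) (entDist h L2 L3) := by
  by_cases h13 : h (L1 ∪ L3) = 0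
  · unfold entDist
    rw [if_pos h13]
    exact le_max_of_le_left (entDist_nonneg h hnonneg L1 L2)
  · by_cases hbig : max (h L1) (h L3) < h L2
    · -- entDist h L1 L2 = 1
      have ha : h L1 < h L2 := (le_max_left _ _).trans_lt hbig
      have hd12 : h L2 ≤ h ((L1 \ L2) ∪ (L2 \ L1)) := by
        have : h L2 ≤ h (L1 ∪ ((L1 \ L2) ∪ (L2 \ L1))) := by
          apply hmono
          intro x hx
          by_cases hx1 : x ∈ L1 <;> simp [hx, hx1]
        rw [hunion] at this
        rcases max_cases (h L1) (h ((L1 \ L2) ∪ (L2 \ L1))) with ⟨heq, _⟩ | ⟨heq, _⟩ <;>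
          rw [heq] at this
        · exact absurd this (not_le_of_gt ha)
        · exact this
      have hU12 : h (L1 ∪ L2) = h L2 := by
        rw [hunion]; exact max_eq_right ha.le
      have h12ne : h (L1 ∪ L2) ≠ 0 := by
        rw [hU12]; exact ne_of_gt ((hnonneg L1).trans_lt ha)
      have hone : (1:ℝ) ≤ entDist h L1 L2 := by
        unfold entDist
        rw [if_neg h12ne, hU12, le_div_iff₀ ((hnonneg L1).trans_lt ha), one_mul]
        exact hd12
      exact le_max_of_le_left ((entDist_le_one h hnonneg hmono L1 L3).trans hone)
    · push_neg at hbig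
      rcases le_total (h L1) (h L3) with hac | hac
      · exact entDist_aux h hnonneg hmono hunion L1 L2 L3
          (hbig.trans_eq (max_eq_right hac)) hac h13
      · have := entDist_aux h hnonneg hmono hunion L3 L2 L1
          (hbig.trans_eq (max_eq_left hac)) hac
          (by rwa [Set.union_comm])
        rw [entDist_symm h L3 L2, entDist_symm h L2 L1, entDist_symm h L3 L1,
          max_comm] at this
        exact this
end

section
/- Let h: P(Σ*) → [0,∞) satisfy monotonicity (A ⊆ B ⇒ h(A) ≤ h(B)) and h(A ∪ B) = max(h(A), h(B)). Define H_S(L1,L2) = h(L1 ∩ L2ᶜ) + h(L1ᶜ ∩ L2). Then H_S satisfies the triangle inequality: H_S(L1,L3) ≤ H_S(L1,L2) + H_S(L2,L3). -/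
/-- The entropy sum distance built from an abstract entropy function `h`. -/
def entSumDist {α : Type*} (h : Set (List α) → ℝ)
    (L1 L2 : Set (List α)) : ℝ :=
  h (L1 ∩ L2ᶜ) + h (L1ᶜ ∩ L2)

theorem stmt13 {α : Type*} (h : Set (List α) → ℝ)
    (hnonneg : ∀ A, 0 ≤ h A)
    (hmono : ∀ A B : Set (List α), A ⊆ B → h A ≤ h B)
    (hunion : ∀ A B : Set (List α), h (A ∪ B) = max (h A) (h B))
    (L1 L2 L3 : Set (List α)) :
    entSumDist h L1 L3 ≤ entSumDist h L1 L2 + entSumDist h L2 L3 := by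
  have key : ∀ A B C : Set (List α), h (A ∩ Cᶜ) ≤ h (A ∩ Bᶜ) + h (B ∩ Cᶜ) := by
    intro A B C
    have hsub : A ∩ Cᶜ ⊆ (A ∩ Bᶜ) ∪ (B ∩ Cᶜ) := by
      intro x ⟨hA, hC⟩
      by_cases hB : x ∈ B
      · exact Or.inr ⟨hB, hC⟩
      · exact Or.inl ⟨hA, hB⟩
    calc h (A ∩ Cᶜ) ≤ h ((A ∩ Bᶜ) ∪ (B ∩ Cᶜ)) := hmono _ _ hsub
      _ = max (h (A ∩ Bᶜ)) (h (B ∩ Cᶜ)) := hunion _ _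
      _ ≤ h (A ∩ Bᶜ) + h (B ∩ Cᶜ) :=
        max_le (le_add_of_nonneg_right (hnonneg _)) (le_add_of_nonneg_left (hnonneg _))
  have h1 : h (L1 ∩ L3ᶜ) ≤ h (L1 ∩ L2ᶜ) + h (L2 ∩ L3ᶜ) := key L1 L2 L3
  have h2 : h (L1ᶜ ∩ L3) ≤ h (L3 ∩ L2ᶜ) + h (L2 ∩ L1ᶜ) := by
    have := key L3 L2 L1
    rwa [Set.inter_comm L1ᶜ L3]
  have h3 : h (L3 ∩ L2ᶜ) = h (L2ᶜ ∩ L3) := by rw [Set.inter_comm]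
  have h4 : h (L2 ∩ L1ᶜ) = h (L1ᶜ ∩ L2) := by rw [Set.inter_comm]
  simp only [entSumDist]
  rw [h3, h4] at h2
  linarith
end

section
/- Let h: P(Σ*) → [0,∞) satisfy monotonicity and h(A ∪ B) = max(h(A), h(B)), and define H_S(L1,L2) = h(L1 ∩ L2ᶜ) + h(L1ᶜ ∩ L2). If h(L1 ∩ L2ᶜ) > 0 and h(L1ᶜ ∩ L2) > 0, then taking R = L1 ∪ L2 one has H_S(L1,L2) > max(H_S(L1,R), H_S(R,L2)). -/
theorem stmt14 {α : Type*} (h : Set (List α) → ℝ)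
    (hnonneg : ∀ A, 0 ≤ h A)
    (hmono : ∀ A B : Set (List α), A ⊆ B → h A ≤ h B)
    (hunion : ∀ A B : Set (List α), h (A ∪ B) = max (h A) (h B))
    (hempty : h ∅ = 0)
    (L1 L2 : Set (List α))
    (h1 : 0 < h (L1 ∩ L2ᶜ)) (h2 : 0 < h (L1ᶜ ∩ L2)) :
    entSumDist h L1 L2 >
      max (entSumDist h L1 (L1 ∪ L2)) (entSumDist h (L1 ∪ L2) L2) := by
  have e1 : L1 ∩ (L1 ∪ L2)ᶜ = (∅ : Set (List α)) := by
    ext x; simp [Set.mem_inter_iff]; tauto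
  have e2 : L1ᶜ ∩ (L1 ∪ L2) = L1ᶜ ∩ L2 := by
    ext x; simp [Set.mem_inter_iff]; tauto
  have e3 : (L1 ∪ L2) ∩ L2ᶜ = L1 ∩ L2ᶜ := by
    ext x; simp [Set.mem_inter_iff]; tauto
  have e4 : (L1 ∪ L2)ᶜ ∩ L2 = (∅ : Set (List α)) := by
    ext x; simp [Set.mem_inter_iff]
  simp only [entSumDist, e1, e2, e3, e4, hempty, zero_add, add_zero]
  rw [gt_iff_lt, sup_lt_iff]
  constructor <;> linarith
end
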